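/- For every real number m ≥ 2 there exists a twice continuously differentiable function φ : ℝ → ℝ such that: (1) φ(0) = φ'(0) = 0; (2) φ(−x) = φ(x) for all x ∈ ℝ; (3) φ''(x) = 0 for all x outside [−2/m, −1/m²] ∪ [1/m², 2/m]; (4) 0 ≤ φ''(x)·|x| ≤ 1/log m for all x ∈ ℝ; (5) the integral of φ'' over [1/m², 2/m] equals 1. -/

import Mathlib

open Real MeasureTheory intervalIntegral

/-- The trapezoid cutoff function used to build the Yamada–Watanabe function. -/
noncomputable def ywRho (m x : ℝ) : ℝ :=
  max 0 (min 1 (min ((x - 1 / m ^ 2) * m ^ 2) ((2 / m - x) * m)))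

/-- The second derivative of the Yamada–Watanabe function. -/
noncomputable def ywPsi (m x : ℝ) : ℝ := ywRho m |x| / (|x| * Real.log m)

/-- The first derivative of the Yamada–Watanabe function. -/
noncomputable def ywG (m x : ℝ) : ℝ := ∫ z in (0:ℝ)..x, ywPsi m z

/-- The Yamada–Watanabe function. -/
noncomputable def ywPhi (m x : ℝ) : ℝ := ∫ y in (0:ℝ)..x, ywG m y

lemma ywRho_continuous (m : ℝ) : Continuous (ywRho m) := by unfold ywRho; fun_prop

lemma ywRho_nonneg (m x : ℝ) : 0 ≤ ywRho m x := le_max_left _ _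

lemma ywRho_le_one (m x : ℝ) : ywRho m x ≤ 1 := max_le zero_le_one (min_le_left _ _)

lemma ywRho_eq_zero {m x : ℝ} (hm : 2 ≤ m) (hx : x ≤ 1 / m ^ 2 ∨ 2 / m ≤ x) :
    ywRho m x = 0 := by
  have hm0 : (0:ℝ) < m := by linarith
  apply max_eq_left
  rcases hx with hx | hx
  · have h : (x - 1 / m ^ 2) * m ^ 2 ≤ 0 :=
      mul_nonpos_of_nonpos_of_nonneg (by linarith) (by positivity)
    calc min 1 (min ((x - 1 / m ^ 2) * m ^ 2) ((2 / m - x) * m))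
        ≤ min ((x - 1 / m ^ 2) * m ^ 2) ((2 / m - x) * m) := min_le_right _ _
      _ ≤ (x - 1 / m ^ 2) * m ^ 2 := min_le_left _ _
      _ ≤ 0 := h
  · have h : (2 / m - x) * m ≤ 0 :=
      mul_nonpos_of_nonpos_of_nonneg (by linarith) (by linarith)
    calc min 1 (min ((x - 1 / m ^ 2) * m ^ 2) ((2 / m - x) * m))
        ≤ min ((x - 1 / m ^ 2) * m ^ 2) ((2 / m - x) * m) := min_le_right _ _
      _ ≤ (2 / m - x) * m := min_le_right _ _
      _ ≤ 0 := h

lemma ywRho_eq₁ {m x : ℝ} (hm : 2 ≤ m) (h1 : 1 / m ^ 2 ≤ x) (h2 : x ≤ 2 / m ^ 2) :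
    ywRho m x = (x - 1 / m ^ 2) * m ^ 2 := by
  have hm0 : (0:ℝ) < m := by linarith
  have hq : (0:ℝ) < m ^ 2 := by positivity
  have h1' : 1 ≤ x * m ^ 2 := by rwa [div_le_iff₀ hq] at h1
  have h2' : x * m ^ 2 ≤ 2 := by rwa [le_div_iff₀ hq] at h2
  have hA0 : 0 ≤ (x - 1 / m ^ 2) * m ^ 2 := by
    have : (1 / m ^ 2) * m ^ 2 = 1 := by field_simp
    nlinarith
  have hA1 : (x - 1 / m ^ 2) * m ^ 2 ≤ 1 := by
    have : (1 / m ^ 2) * m ^ 2 = 1 := by field_simp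
    nlinarith
  have hAB : (x - 1 / m ^ 2) * m ^ 2 ≤ (2 / m - x) * m := by
    have e1 : (2 / m) * m = 2 := by field_simp
    have e2 : (1 / m ^ 2) * m ^ 2 = 1 := by field_simp
    have hxm : x * m ≤ 1 := by
      have hxx : x ≤ 2 / m ^ 2 := h2
      have : x * m ≤ (2 / m ^ 2) * m := by nlinarith
      have e3 : (2 / m ^ 2) * m = 2 / m := by field_simp
      have : x * m ≤ 2 / m := by linarith [e3 ▸ this]
      have : 2 / m ≤ 1 := by rw [div_le_one hm0]; linarith
      linarith
    nlinarith
  rw [ywRho, min_eq_left hAB, min_eq_right hA1, max_eq_right hA0]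

lemma ywRho_eq₂ {m x : ℝ} (hm : 2 ≤ m) (h1 : 2 / m ^ 2 ≤ x) (h2 : x ≤ 1 / m) :
    ywRho m x = 1 := by
  have hm0 : (0:ℝ) < m := by linarith
  have hq : (0:ℝ) < m ^ 2 := by positivity
  have h1' : 2 ≤ x * m ^ 2 := by rwa [div_le_iff₀ hq] at h1
  have h2' : x * m ≤ 1 := by rwa [le_div_iff₀ hm0] at h2
  have hA : 1 ≤ (x - 1 / m ^ 2) * m ^ 2 := by
    have : (1 / m ^ 2) * m ^ 2 = 1 := by field_simp
    nlinarith
  have hB : 1 ≤ (2 / m - x) * m := by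
    have : (2 / m) * m = 2 := by field_simp
    nlinarith
  rw [ywRho, min_eq_left (le_min hA hB), max_eq_right zero_le_one]

lemma ywRho_eq₃ {m x : ℝ} (hm : 2 ≤ m) (h1 : 1 / m ≤ x) (h2 : x ≤ 2 / m) :
    ywRho m x = (2 / m - x) * m := by
  have hm0 : (0:ℝ) < m := by linarith
  have hq : (0:ℝ) < m ^ 2 := by positivity
  have h1' : 1 ≤ x * m := by rwa [div_le_iff₀ hm0] at h1
  have h2' : x * m ≤ 2 := by rwa [le_div_iff₀ hm0] at h2
  have hB0 : 0 ≤ (2 / m - x) * m := by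
    have : (2 / m) * m = 2 := by field_simp
    nlinarith
  have hB1 : (2 / m - x) * m ≤ 1 := by
    have : (2 / m) * m = 2 := by field_simp
    nlinarith
  have hBA : (2 / m - x) * m ≤ (x - 1 / m ^ 2) * m ^ 2 := by
    have e1 : (2 / m) * m = 2 := by field_simp
    have e2 : (1 / m ^ 2) * m ^ 2 = 1 := by field_simp
    nlinarith
  rw [ywRho, min_eq_right hBA, min_eq_right hB1, max_eq_right hB0]

lemma ywPsi_continuous {m : ℝ} (hm : 2 ≤ m) : Continuous (ywPsi m) := by
  have hm0 : (0:ℝ) < m := by linarith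
  have ha : (0:ℝ) < 1 / m ^ 2 := by positivity
  have hrho : Continuous (ywRho m) := ywRho_continuous m
  rw [continuous_iff_continuousAt]
  intro x
  rcases eq_or_ne x 0 with rfl | hx
  · have hev : ywPsi m =ᶠ[nhds (0:ℝ)] fun _ => 0 := by
      filter_upwards [Metric.ball_mem_nhds (0:ℝ) ha] with y hy
      rw [Metric.mem_ball, Real.dist_eq, sub_zero] at hy
      have h0 : ywRho m |y| = 0 :=
        ywRho_eq_zero hm (Or.inl (le_of_lt hy))
      simp [ywPsi, h0]
    exact hev.continuousAt
  · have hne : |x| * Real.log m ≠ 0 := by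
      have : |x| ≠ 0 := abs_ne_zero.mpr hx
      have : 0 < Real.log m := Real.log_pos (by linarith)
      positivity
    exact ((hrho.comp continuous_abs).continuousAt).div
      ((continuous_abs.mul continuous_const).continuousAt) hne

lemma yw_intble {m : ℝ} (hm : 2 ≤ m) {c d : ℝ} (hc : 0 < c) (hd : 0 < d) :
    IntervalIntegrable (fun x => ywRho m x / x) volume c d := by
  apply ContinuousOn.intervalIntegrable
  apply ((ywRho_continuous m).continuousOn.div continuousOn_id)
  intro x hx
  rcases Set.mem_uIcc.mp hx with ⟨h, _⟩ | ⟨h, _⟩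
  · exact ne_of_gt (lt_of_lt_of_le hc h)
  · exact ne_of_gt (lt_of_lt_of_le hd h)

lemma yw_int_total {m : ℝ} (hm : 2 ≤ m) :
    ∫ x in (1 / m ^ 2)..(2 / m), ywRho m x / x = Real.log m := by
  have hm0 : (0:ℝ) < m := by linarith
  have hq : (0:ℝ) < m ^ 2 := by positivity
  have ha : (0:ℝ) < 1 / m ^ 2 := by positivity
  have ha2 : (0:ℝ) < 2 / m ^ 2 := by positivity
  have hb2 : (0:ℝ) < 1 / m := by positivity
  have hb : (0:ℝ) < 2 / m := by positivity
  have o1 : 1 / m ^ 2 ≤ 2 / m ^ 2 := by gcongr; norm_num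
  have o2 : 2 / m ^ 2 ≤ 1 / m := by
    rw [div_le_div_iff₀ hq hm0]; nlinarith
  have o3 : 1 / m ≤ 2 / m := by gcongr; norm_num
  have I1 : ∫ x in (1 / m ^ 2)..(2 / m ^ 2), ywRho m x / x = 1 - Real.log 2 := by
    rw [integral_congr (g := fun x => m ^ 2 - 1 / x) ?_]
    · rw [integral_sub intervalIntegrable_const ?_]
      · rw [integral_one_div_of_pos ha ha2, intervalIntegral.integral_const]
        have h4 : (2 / m ^ 2) / (1 / m ^ 2) = 2 := by field_simp
        rw [h4]
        have h5 : ((2 / m ^ 2) - 1 / m ^ 2) = 1 / m ^ 2 := by ring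
        rw [h5, smul_eq_mul]
        field_simp
      · apply ContinuousOn.intervalIntegrable
        apply continuousOn_const.div continuousOn_id
        intro y hy
        rw [Set.uIcc_of_le o1] at hy
        exact ne_of_gt (lt_of_lt_of_le ha hy.1)
    · intro y hy
      rw [Set.uIcc_of_le o1] at hy
      have hy0 : 0 < y := lt_of_lt_of_le ha hy.1
      show ywRho m y / y = _
      rw [ywRho_eq₁ hm hy.1 hy.2]
      field_simp
  have I2 : ∫ x in (2 / m ^ 2)..(1 / m), ywRho m x / x = Real.log m - Real.log 2 := by
    rw [integral_congr (g := fun x => 1 / x) ?_]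
    · rw [integral_one_div_of_pos ha2 hb2]
      have h4 : (1 / m) / (2 / m ^ 2) = m / 2 := by field_simp
      rw [h4, Real.log_div (ne_of_gt hm0) two_ne_zero]
    · intro y hy
      rw [Set.uIcc_of_le o2] at hy
      show ywRho m y / y = 1 / y
      rw [ywRho_eq₂ hm hy.1 hy.2]
  have I3 : ∫ x in (1 / m)..(2 / m), ywRho m x / x = 2 * Real.log 2 - 1 := by
    rw [integral_congr (g := fun x => 2 * (1 / x) - m) ?_]
    · rw [integral_sub ?_ intervalIntegrable_const]
      · rw [intervalIntegral.integral_const_mul, integral_one_div_of_pos hb2 hb,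
          intervalIntegral.integral_const]
        have h4 : (2 / m) / (1 / m) = 2 := by field_simp
        rw [h4, smul_eq_mul]
        have h5 : ((2 / m) - 1 / m) = 1 / m := by ring
        rw [h5]
        field_simp
      · apply ContinuousOn.intervalIntegrable
        apply continuousOn_const.mul (continuousOn_const.div continuousOn_id ?_)
        intro y hy
        rw [Set.uIcc_of_le o3] at hy
        exact ne_of_gt (lt_of_lt_of_le hb2 hy.1)
    · intro y hy
      rw [Set.uIcc_of_le o3] at hy
      have hy0 : 0 < y := lt_of_lt_of_le hb2 hy.1
      show ywRho m y / y = _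
      rw [ywRho_eq₃ hm hy.1 hy.2]
      field_simp
  rw [← integral_add_adjacent_intervals (b := 1 / m)
      (yw_intble hm ha hb2) (yw_intble hm hb2 hb),
    ← integral_add_adjacent_intervals (b := 2 / m ^ 2)
      (yw_intble hm ha ha2) (yw_intble hm ha2 hb2), I1, I2, I3]
  ring

/-- For every real `m ≥ 2` there exists a Yamada–Watanabe function of order `m`:
a `C²` function `φ` with `φ(0) = φ'(0) = 0`, `φ` even, `φ''` supported in
`[-2/m, -1/m²] ∪ [1/m², 2/m]`, `0 ≤ φ''(x)|x| ≤ 1/log m`, and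
`∫_{1/m²}^{2/m} φ'' = 1`. -/
theorem exists_yamada_watanabe_function (m : ℝ) (hm : 2 ≤ m) :
    ∃ φ : ℝ → ℝ, ContDiff ℝ 2 φ ∧
      φ 0 = 0 ∧ deriv φ 0 = 0 ∧
      (∀ x : ℝ, φ (-x) = φ x) ∧
      (∀ x : ℝ, x ∉ Set.Icc (-(2 / m)) (-(1 / m ^ 2)) ∪ Set.Icc (1 / m ^ 2) (2 / m) →
        deriv (deriv φ) x = 0) ∧
      (∀ x : ℝ, 0 ≤ deriv (deriv φ) x * |x| ∧ deriv (deriv φ) x * |x| ≤ 1 / Real.log m) ∧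
      ∫ x in (1 / m ^ 2)..(2 / m), deriv (deriv φ) x = 1 := by
  have hm0 : (0:ℝ) < m := by linarith
  have ha : (0:ℝ) < 1 / m ^ 2 := by positivity
  have hb : (0:ℝ) < 2 / m := by positivity
  have hlog : 0 < Real.log m := Real.log_pos (by linarith)
  have h : Continuous (ywPsi m) := ywPsi_continuous hm
  have hG : ∀ x, HasDerivAt (ywG m) (ywPsi m x) x :=
    fun x => (h.integral_hasStrictDerivAt 0 x).hasDerivAt
  have hGc : Continuous (ywG m) := by
    rw [continuous_iff_continuousAt]; exact fun x => (hG x).continuousAt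
  have hP : ∀ x, HasDerivAt (ywPhi m) (ywG m x) x :=
    fun x => (hGc.integral_hasStrictDerivAt 0 x).hasDerivAt
  have hd1 : deriv (ywPhi m) = ywG m := funext fun x => (hP x).deriv
  have hd2 : deriv (ywG m) = ywPsi m := funext fun x => (hG x).deriv
  have hdd : deriv (deriv (ywPhi m)) = ywPsi m := by rw [hd1, hd2]
  refine ⟨ywPhi m, ?_, ?_, ?_, ?_, ?_, ?_, ?_⟩
  · -- C²
    rw [show (2 : WithTop ℕ∞) = 1 + 1 from rfl, contDiff_succ_iff_deriv]
    refine ⟨fun x => (hP x).differentiableAt, by simp, ?_⟩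
    rw [hd1, contDiff_one_iff_deriv]
    exact ⟨fun x => (hG x).differentiableAt, hd2 ▸ h⟩
  · -- φ 0 = 0
    simp [ywPhi]
  · -- φ' 0 = 0
    rw [hd1]; simp [ywG]
  · -- even
    intro x
    have hpsi_even : ∀ y, ywPsi m (-y) = ywPsi m y := by intro y; simp [ywPsi]
    have hG_odd : ∀ y, ywG m (-y) = -ywG m y := by
      intro y
      have h1 : (∫ z in (0:ℝ)..y, ywPsi m (-z)) = ∫ z in (-y)..(-0:ℝ), ywPsi m z :=
        intervalIntegral.integral_comp_neg _
      simp only [hpsi_even, neg_zero] at h1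
      rw [show ywG m y = ∫ z in (0:ℝ)..y, ywPsi m z from rfl, h1, ywG,
        intervalIntegral.integral_symm]
    have h1 : (∫ z in (0:ℝ)..x, ywG m (-z)) = ∫ z in (-x)..(-0:ℝ), ywG m z :=
      intervalIntegral.integral_comp_neg _
    simp only [neg_zero] at h1
    have h2 : (∫ z in (0:ℝ)..x, ywG m (-z)) = -ywPhi m x := by
      simp only [hG_odd]; rw [intervalIntegral.integral_neg]; rfl
    rw [show ywPhi m (-x) = ∫ z in (0:ℝ)..(-x), ywG m z from rfl,
      intervalIntegral.integral_symm, ← h1, h2, neg_neg]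
  · -- support
    intro x hx
    rw [hdd]
    simp only [Set.mem_union, Set.mem_Icc, not_or, not_and_or, not_le] at hx
    have hzero : ywRho m |x| = 0 := by
      apply ywRho_eq_zero hm
      rcases le_or_gt 0 x with hx0 | hx0
      · rw [abs_of_nonneg hx0]
        rcases hx.2 with h' | h'
        · exact Or.inl (le_of_lt h')
        · exact Or.inr (le_of_lt h')
      · rw [abs_of_neg hx0]
        rcases hx.1 with h' | h'
        · exact Or.inr (by linarith)
        · exact Or.inl (by linarith)
    simp [ywPsi, hzero]
  · -- bound
    intro x
    rw [hdd]
    rcases eq_or_ne x 0 with rfl | hx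
    · simp [ywPsi]
      positivity
    · have habs : |x| ≠ 0 := abs_ne_zero.mpr hx
      have heq : ywPsi m x * |x| = ywRho m |x| / Real.log m := by
        rw [ywPsi]
        field_simp
      rw [heq]
      constructor
      · exact div_nonneg (ywRho_nonneg m _) (le_of_lt hlog)
      · gcongr; exact ywRho_le_one m _
  · -- integral
    rw [hdd]
    have hcong : ∀ y ∈ Set.uIcc (1 / m ^ 2) (2 / m),
        ywPsi m y = (ywRho m y / y) / Real.log m := by
      intro y hy
      have hab : 1 / m ^ 2 ≤ 2 / m := by
        rw [div_le_div_iff₀ (by positivity) hm0]; nlinarith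
      rw [Set.uIcc_of_le hab] at hy
      have hy0 : 0 < y := lt_of_lt_of_le ha hy.1
      rw [ywPsi, abs_of_pos hy0, div_div]
    rw [integral_congr hcong, intervalIntegral.integral_div, yw_int_total hm,
      div_self (ne_of_gt hlog)]
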